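/- The collection {S ⊆ V : G[S] is a locally h-clique densest subgraph of G} has cardinality at most |V|. -/

import Mathlib

open Finset

variable {V : Type*} [Fintype V] [DecidableEq V]

/-- `Ψ_h(G[S])`: the set of `h`-cliques of `G` all of whose vertices lie in `S`
(equivalently, the `h`-cliques of the induced subgraph `G[S]`). -/
def cliquesIn (G : SimpleGraph V) [DecidableRel G.Adj] (h : ℕ) (S : Finset V) :
    Finset (Finset V) :=
  Finset.univ.filter fun c => G.IsNClique h c ∧ c ⊆ S

/-- the `h`-clique density `d_h(G[S]) = |Ψ_h(G[S])| / |S|`. -/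
noncomputable def cliqueDensity (G : SimpleGraph V) [DecidableRel G.Adj] (h : ℕ)
    (S : Finset V) : ℝ :=
  ((cliquesIn G h S).card : ℝ) / (S.card : ℝ)

/-- `G[S]` is `h`-clique `ρ`-compact: `S` is nonempty, the induced subgraph is
connected, and removing any nonempty `U ⊆ S` removes at least `ρ·|U|` `h`-cliques. -/
def IsCliqueCompact (G : SimpleGraph V) [DecidableRel G.Adj] (h : ℕ) (ρ : ℝ)
    (S : Finset V) : Prop :=
  S.Nonempty ∧ (G.induce (S : Set V)).Connected ∧
    ∀ U ⊆ S, U.Nonempty →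
      ρ * (U.card : ℝ) ≤ ((cliquesIn G h S).card : ℝ) - ((cliquesIn G h (S \ U)).card : ℝ)

/-- `G[S]` is a locally `h`-clique densest subgraph of `G`. -/
def IsLhCDS (G : SimpleGraph V) [DecidableRel G.Adj] (h : ℕ) (S : Finset V) : Prop :=
  IsCliqueCompact G h (cliqueDensity G h S) S ∧
    ¬ ∃ S' : Finset V, S ⊂ S' ∧ IsCliqueCompact G h (cliqueDensity G h S) S'

/-- the `h`-clique compact number `φ_h(u)` of a vertex `u`. -/
noncomputable def compactNumber (G : SimpleGraph V) [DecidableRel G.Adj] (h : ℕ)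
    (u : V) : ℝ :=
  sSup {ρ : ℝ | 0 ≤ ρ ∧ ∃ S : Finset V, u ∈ S ∧ IsCliqueCompact G h ρ S}

/-- `α` is a feasible solution to the convex program `CP(G,h)`: each `h`-clique
distributes a unit weight, nonnegatively, among its vertices. -/
def CPFeasible (G : SimpleGraph V) [DecidableRel G.Adj] (h : ℕ)
    (α : Finset V → V → ℝ) : Prop :=
  (∀ ψ ∈ cliquesIn G h Finset.univ, ∀ u ∈ ψ, 0 ≤ α ψ u) ∧
    (∀ ψ ∈ cliquesIn G h Finset.univ, ∑ u ∈ ψ, α ψ u = 1)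

/-- `r(u)`: the total weight received by vertex `u` under `α`. -/
def cpR (G : SimpleGraph V) [DecidableRel G.Adj] (h : ℕ) (α : Finset V → V → ℝ)
    (u : V) : ℝ :=
  ∑ ψ ∈ (cliquesIn G h Finset.univ).filter (fun ψ => u ∈ ψ), α ψ u

/-- `α` is an optimal solution to `CP(G,h)`: it is feasible and minimizes
`Σ_u r(u)²` over all feasible solutions. -/
def CPOptimal (G : SimpleGraph V) [DecidableRel G.Adj] (h : ℕ)
    (α : Finset V → V → ℝ) : Prop :=
  CPFeasible G h α ∧
    ∀ β : Finset V → V → ℝ, CPFeasible G h β →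
      ∑ u : V, (cpR G h α u) ^ 2 ≤ ∑ u : V, (cpR G h β u) ^ 2



lemma cliquesIn_mono (G : SimpleGraph V) [DecidableRel G.Adj] (h : ℕ) {S T : Finset V}
    (hST : S ⊆ T) : cliquesIn G h S ⊆ cliquesIn G h T := by
  intro c hc
  simp only [cliquesIn, mem_filter, mem_univ, true_and] at hc ⊢
  exact ⟨hc.1, hc.2.trans hST⟩

lemma cliqueDensity_nonneg (G : SimpleGraph V) [DecidableRel G.Adj] (h : ℕ) (S : Finset V) :
    0 ≤ cliqueDensity G h S := by
  unfold cliqueDensity; positivity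

lemma compact_mono (G : SimpleGraph V) [DecidableRel G.Adj] (h : ℕ) {ρ ρ' : ℝ} {S : Finset V}
    (hρ : ρ' ≤ ρ) (hc : IsCliqueCompact G h ρ S) : IsCliqueCompact G h ρ' S := by
  obtain ⟨h1, h2, h3⟩ := hc
  refine ⟨h1, h2, fun U hU hUne => ?_⟩
  calc ρ' * U.card ≤ ρ * U.card := by
        apply mul_le_mul_of_nonneg_right hρ (by positivity)
    _ ≤ _ := h3 U hU hUne

/-- The removal inequality holds also for empty `U`, trivially. -/
lemma compact_remove (G : SimpleGraph V) [DecidableRel G.Adj] (h : ℕ) {ρ : ℝ} {S : Finset V}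
    (hc : IsCliqueCompact G h ρ S) (U : Finset V) (hU : U ⊆ S) :
    ρ * (U.card : ℝ) ≤ ((cliquesIn G h S).card : ℝ) - ((cliquesIn G h (S \ U)).card : ℝ) := by
  rcases U.eq_empty_or_nonempty with rfl | hne
  · simp
  · exact hc.2.2 U hU hne

/-- Union of two compact sets with nonempty intersection is compact for the smaller ρ. -/
lemma compact_union (G : SimpleGraph V) [DecidableRel G.Adj] (h : ℕ) {ρS ρT : ℝ}
    {S T : Finset V} (hρS : 0 ≤ ρS) (hρ : ρS ≤ ρT)
    (hS : IsCliqueCompact G h ρS S) (hT : IsCliqueCompact G h ρT T)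
    (hint : (S ∩ T).Nonempty) : IsCliqueCompact G h ρS (S ∪ T) := by
  refine ⟨hS.1.mono subset_union_left, ?_, ?_⟩
  · have := SimpleGraph.induce_union_connected (s := (S : Set V)) (t := (T : Set V))
      hS.2.1.preconnected hT.2.1.preconnected (by
        obtain ⟨x, hx⟩ := hint
        exact ⟨x, by simpa using (Finset.mem_inter.mp hx)⟩)
    have hcoe : ((S : Set V) ∪ (T : Set V)) = ((S ∪ T : Finset V) : Set V) := by
      simp
    rwa [hcoe] at this
  · intro U hU hUne
    set U1 := U ∩ S with hU1
    set U2 := U \ S with hU2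
    have hU1S : U1 ⊆ S := inter_subset_right
    have hU2T : U2 ⊆ T := by
      intro x hx
      rcases Finset.mem_sdiff.mp hx with ⟨hxU, hxS⟩
      rcases Finset.mem_union.mp (hU hxU) with h' | h'
      · exact absurd h' hxS
      · exact h'
    have hcard : (U.card : ℝ) = U1.card + U2.card := by
      rw [hU1, hU2]
      exact_mod_cast (Finset.card_inter_add_card_sdiff U S).symm
    -- sets of killed cliques
    set A := cliquesIn G h S \ cliquesIn G h (S \ U1) with hA
    set B := cliquesIn G h T \ cliquesIn G h (T \ U2) with hB
    set K := cliquesIn G h (S ∪ T) \ cliquesIn G h ((S ∪ T) \ U) with hK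
    have hAK : A ⊆ K := by
      intro c hc
      rcases Finset.mem_sdiff.mp hc with ⟨hc1, hc2⟩
      simp only [cliquesIn, mem_filter, mem_univ, true_and] at hc1 hc2
      refine Finset.mem_sdiff.mpr ⟨?_, ?_⟩
      · simp only [cliquesIn, mem_filter, mem_univ, true_and]
        exact ⟨hc1.1, hc1.2.trans subset_union_left⟩
      · simp only [cliquesIn, mem_filter, mem_univ, true_and]
        rintro ⟨-, hsub⟩
        apply hc2
        refine ⟨hc1.1, fun x hx => ?_⟩
        have hxS := hc1.2 hx
        have := hsub hx
        rcases Finset.mem_sdiff.mp this with ⟨-, hxU⟩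
        exact Finset.mem_sdiff.mpr ⟨hxS, fun hx1 => hxU (Finset.mem_of_mem_inter_left hx1)⟩
    have hBK : B ⊆ K := by
      intro c hc
      rcases Finset.mem_sdiff.mp hc with ⟨hc1, hc2⟩
      simp only [cliquesIn, mem_filter, mem_univ, true_and] at hc1 hc2
      refine Finset.mem_sdiff.mpr ⟨?_, ?_⟩
      · simp only [cliquesIn, mem_filter, mem_univ, true_and]
        exact ⟨hc1.1, hc1.2.trans subset_union_right⟩
      · simp only [cliquesIn, mem_filter, mem_univ, true_and]
        rintro ⟨-, hsub⟩
        apply hc2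
        refine ⟨hc1.1, fun x hx => ?_⟩
        have hxT := hc1.2 hx
        rcases Finset.mem_sdiff.mp (hsub hx) with ⟨-, hxU⟩
        refine Finset.mem_sdiff.mpr ⟨hxT, fun hx2 => hxU (Finset.mem_sdiff.mp hx2).1⟩
    have hAB : Disjoint A B := by
      rw [Finset.disjoint_left]
      intro c hcA hcB
      rcases Finset.mem_sdiff.mp hcA with ⟨hc1, -⟩
      rcases Finset.mem_sdiff.mp hcB with ⟨hc1', hc2'⟩
      simp only [cliquesIn, mem_filter, mem_univ, true_and] at hc1 hc1' hc2'
      apply hc2'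
      refine ⟨hc1'.1, fun x hx => ?_⟩
      refine Finset.mem_sdiff.mpr ⟨hc1'.2 hx, fun hx2 => ?_⟩
      exact (Finset.mem_sdiff.mp hx2).2 (hc1.2 hx)
    have hcardK : (A.card : ℝ) + B.card ≤ K.card := by
      have hsub : A ∪ B ⊆ K := Finset.union_subset hAK hBK
      have h1 : A.card + B.card ≤ K.card := by
        rw [← Finset.card_union_of_disjoint hAB]
        exact Finset.card_le_card hsub
      exact_mod_cast h1
    have cardA : (A.card : ℝ) = (cliquesIn G h S).card - (cliquesIn G h (S \ U1)).card := by
      rw [hA]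
      have := Finset.card_sdiff_of_subset (cliquesIn_mono G h (sdiff_subset : S \ U1 ⊆ S))
      rw [this]
      have hle := Finset.card_le_card (cliquesIn_mono G h (sdiff_subset : S \ U1 ⊆ S))
      push_cast [Nat.cast_sub hle]
      ring
    have cardB : (B.card : ℝ) = (cliquesIn G h T).card - (cliquesIn G h (T \ U2)).card := by
      rw [hB]
      have := Finset.card_sdiff_of_subset (cliquesIn_mono G h (sdiff_subset : T \ U2 ⊆ T))
      rw [this]
      have hle := Finset.card_le_card (cliquesIn_mono G h (sdiff_subset : T \ U2 ⊆ T))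
      push_cast [Nat.cast_sub hle]
      ring
    have cardK : (K.card : ℝ) = (cliquesIn G h (S ∪ T)).card
        - (cliquesIn G h ((S ∪ T) \ U)).card := by
      rw [hK]
      have := Finset.card_sdiff_of_subset (cliquesIn_mono G h (sdiff_subset : (S ∪ T) \ U ⊆ S ∪ T))
      rw [this]
      have hle := Finset.card_le_card
        (cliquesIn_mono G h (sdiff_subset : (S ∪ T) \ U ⊆ S ∪ T))
      push_cast [Nat.cast_sub hle]
      ring
    have hS' : ρS * U1.card ≤ (A.card : ℝ) := by
      rw [cardA]; exact compact_remove G h hS U1 hU1S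
    have hT' : ρS * U2.card ≤ (B.card : ℝ) := by
      rw [cardB]
      calc ρS * U2.card ≤ ρT * U2.card := mul_le_mul_of_nonneg_right hρ (by positivity)
        _ ≤ _ := compact_remove G h hT U2 hU2T
    rw [← cardK]
    calc ρS * U.card = ρS * U1.card + ρS * U2.card := by rw [hcard]; ring
      _ ≤ (A.card : ℝ) + B.card := add_le_add hS' hT'
      _ ≤ K.card := hcardK

lemma lhcds_disjoint (G : SimpleGraph V) [DecidableRel G.Adj] (h : ℕ) {S T : Finset V}
    (hS : IsLhCDS G h S) (hT : IsLhCDS G h T) (hne : S ≠ T) : Disjoint S T := by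
  by_contra hdis
  rw [Finset.not_disjoint_iff_nonempty_inter] at hdis
  -- WLOG via helper handling the containment case first
  -- containment case: if T ⊊ S, derive ρT ≤ ρS then contradict T's maximality
  have key : ∀ S T : Finset V, IsLhCDS G h S → IsLhCDS G h T → T ⊂ S → False := by
    intro S T hS hT hsub
    set ρS := cliqueDensity G h S
    set ρT := cliqueDensity G h T
    have hTne : T.Nonempty := hT.1.1
    have hUne : (S \ T).Nonempty := by
      rw [Finset.sdiff_nonempty]
      exact fun hc => hsub.2 hc
    have hrem := hS.1.2.2 (S \ T) sdiff_subset hUne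
    have hSdiff : S \ (S \ T) = T := by
      rw [sdiff_sdiff_right_self]
      exact inf_eq_right.mpr hsub.1
    rw [hSdiff] at hrem
    have hScard : (0:ℝ) < S.card := by
      exact_mod_cast Finset.card_pos.mpr hS.1.1
    have hTcard : (0:ℝ) < T.card := by
      exact_mod_cast Finset.card_pos.mpr hTne
    have hPsiS : ((cliquesIn G h S).card : ℝ) = ρS * S.card := by
      exact (div_mul_cancel₀ _ hScard.ne').symm
    have hPsiT : ((cliquesIn G h T).card : ℝ) = ρT * T.card := by
      exact (div_mul_cancel₀ _ hTcard.ne').symm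
    have hcardsd : ((S \ T).card : ℝ) = S.card - T.card := by
      have := Finset.card_sdiff_of_subset hsub.1
      push_cast [this, Nat.cast_sub (Finset.card_le_card hsub.1)]
      ring
    have hρTS : ρT ≤ ρS := by
      rw [hcardsd, hPsiS, hPsiT] at hrem
      nlinarith
    exact hT.2 ⟨S, hsub, compact_mono G h hρTS hS.1⟩
  set ρS := cliqueDensity G h S
  set ρT := cliqueDensity G h T
  -- WLOG ρS ≤ ρT
  rcases le_total ρS ρT with hρ | hρ
  · by_cases hTS : T ⊆ S
    · exact key S T hS hT (Finset.ssubset_iff_subset_ne.mpr ⟨hTS, hne.symm⟩)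
    · have hcomp := compact_union G h (cliqueDensity_nonneg G h S) hρ hS.1 hT.1 hdis
      exact hS.2 ⟨S ∪ T, Finset.ssubset_iff_subset_ne.mpr ⟨subset_union_left,
        fun hc => hTS (hc ▸ subset_union_right)⟩, hcomp⟩
  · by_cases hST : S ⊆ T
    · exact key T S hT hS (Finset.ssubset_iff_subset_ne.mpr ⟨hST, hne⟩)
    · have hcomp := compact_union G h (cliqueDensity_nonneg G h T) hρ hT.1 hS.1
        (by rwa [Finset.inter_comm])
      exact hT.2 ⟨T ∪ S, Finset.ssubset_iff_subset_ne.mpr ⟨subset_union_left,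
        fun hc => hST (hc ▸ subset_union_right)⟩, hcomp⟩

/-- The collection of vertex sets of locally `h`-clique densest
subgraphs of `G` has cardinality at most `|V|`. -/
theorem stmt_3 (G : SimpleGraph V) [DecidableRel G.Adj] (h : ℕ) (hh : 2 ≤ h) :
    {S : Finset V | IsLhCDS G h S}.ncard ≤ Fintype.card V := by
  classical
  set 𝒮 : Finset (Finset V) := Finset.univ.filter (fun S => IsLhCDS G h S) with h𝒮
  have hset : {S : Finset V | IsLhCDS G h S} = ↑𝒮 := by
    ext S; simp [h𝒮]
  rw [hset, Set.ncard_coe_finset]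
  have hdisj : ∀ S ∈ 𝒮, ∀ T ∈ 𝒮, S ≠ T → Disjoint (id S) (id T) := by
    intro S hSm T hTm hne
    simp only [h𝒮, mem_filter] at hSm hTm
    exact lhcds_disjoint G h hSm.2 hTm.2 hne
  have hbu := Finset.card_biUnion hdisj
  calc 𝒮.card = ∑ _S ∈ 𝒮, 1 := by simp
    _ ≤ ∑ S ∈ 𝒮, (id S).card := by
        apply Finset.sum_le_sum
        intro S hSm
        simp only [h𝒮, mem_filter] at hSm
        exact Finset.card_pos.mpr hSm.2.1.1
    _ = (𝒮.biUnion id).card := hbu.symm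
    _ ≤ Fintype.card V := by
        simpa using Finset.card_le_card (Finset.subset_univ (𝒮.biUnion id))
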